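/- Let N be a net, P = ((S', T', F', M₀'), π) a GR-process of N, and U ⊆ T' a set of transitions such that (t,u) ∈ F'⁺ and u ∈ U imply t ∈ U. Then there is a unique prefix of P whose set of transitions is U (namely the restriction of P to U together with all places that are initial or postplaces of transitions in U). -/

import Mathlib

open scoped Classical

noncomputable section

/-- A place/transition net: `pre t s` and `post t s` are the arc weights
`F(s,t)` and `F(t,s)` of the flow relation, and `M0` is the initial marking.
Every transition has a finite non-empty set of preplaces and a finite set of
postplaces. -/
structure Net (S : Type*) (T : Type*) where
  pre : T → S → ℕ
  post : T → S → ℕ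
  M0 : S → ℕ
  pre_fin : ∀ t, {s | pre t s ≠ 0}.Finite
  pre_ne : ∀ t, ∃ s, pre t s ≠ 0
  post_fin : ∀ t, {s | post t s ≠ 0}.Finite

namespace Net

variable {S T : Type*}

/-- `•G`: the multiset of preplaces of a finite multiset `G` of transitions,
as a function `S → ℕ`. -/
def preM (N : Net S T) (G : Multiset T) (s : S) : ℕ :=
  (G.map fun t => N.pre t s).sum

/-- `G•`: the multiset of postplaces of a finite multiset `G` of transitions. -/
def postM (N : Net S T) (G : Multiset T) (s : S) : ℕ :=
  (G.map fun t => N.post t s).sum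

/-- The (non-empty, finite) multiset `G` of transitions is enabled in marking `M`. -/
def Enabled (N : Net S T) (M : S → ℕ) (G : Multiset T) : Prop :=
  G ≠ 0 ∧ ∀ s, N.preM G s ≤ M s

/-- `G` is a step from `M` to `M'`. -/
def Step (N : Net S T) (M : S → ℕ) (G : Multiset T) (M' : S → ℕ) : Prop :=
  N.Enabled M G ∧ ∀ s, M' s = M s - N.preM G s + N.postM G s

/-- `M →σ M'`: sequential firing of the word `σ` of transitions. -/
def FireSeq (N : Net S T) : (S → ℕ) → List T → (S → ℕ) → Prop
  | M, [], M' => M' = M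
  | M, t :: σ, M' => ∃ M₁, N.Step M {t} M₁ ∧ N.FireSeq M₁ σ M'

/-- `σ` is a firing sequence of `N`. -/
def FS (N : Net S T) (σ : List T) : Prop := ∃ M', N.FireSeq N.M0 σ M'

/-- `M` is reachable from the initial marking. -/
def Reachable (N : Net S T) (M : S → ℕ) : Prop := ∃ σ, N.FireSeq N.M0 σ M

/-- Two firing sequences are adjacent iff they differ only in the exchange of
two neighbouring transitions that could have been fired in one step. -/
def Adjacent (N : Net S T) (σ ρ : List T) : Prop :=
  N.FS σ ∧ N.FS ρ ∧
    ∃ (σ₁ : List T) (t u : T) (σ₂ : List T) (M : S → ℕ),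
      σ = σ₁ ++ t :: u :: σ₂ ∧ ρ = σ₁ ++ u :: t :: σ₂ ∧
      N.FireSeq N.M0 σ₁ M ∧ N.Enabled M (t ::ₘ {u})

/-- `↔*`: the reflexive transitive closure of adjacency. -/
def AdjEquiv (N : Net S T) : List T → List T → Prop :=
  Relation.ReflTransGen N.Adjacent

/-- A structural conflict net: transitions that can occur together in a step
never share a preplace. -/
def StructuralConflictNet (N : Net S T) : Prop :=
  ∀ t u : T, (∃ M, N.Reachable M ∧ N.Enabled M (t ::ₘ {u})) →
    ∀ s, N.pre t s = 0 ∨ N.pre u s = 0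

/-- The finite non-empty multiset `G` of transitions is in (semantic) conflict
in the marking `M`: every `G↾{t}` is enabled but `G` itself is not. -/
def InConflict (N : Net S T) (M : S → ℕ) (G : Multiset T) : Prop :=
  G ≠ 0 ∧ (∀ t ∈ G, N.Enabled M (Multiset.replicate (G.count t) t)) ∧
    ¬ N.Enabled M G

/-- `N` is (semantic) conflict-free. -/
def ConflictFree (N : Net S T) : Prop :=
  ∀ M, N.Reachable M → ∀ G : Multiset T, ¬ N.InConflict M G

end Net

/-- The type of firing sequences of `N`. -/
def FSeq {S T : Type*} (N : Net S T) := {σ : List T // N.FS σ}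

/-- Partial FS-runs: `↔*`-equivalence classes of firing sequences. -/
def PartialFSRun {S T : Type*} (N : Net S T) :=
  Quot (fun σ ρ : FSeq N => N.AdjEquiv σ.1 ρ.1)

/-- `[σ]`, the `↔*`-equivalence class of a firing sequence. -/
def fsClass {S T : Type*} (N : Net S T) (σ : FSeq N) : PartialFSRun N :=
  Quot.mk _ σ

/-- The prefix order on partial FS-runs: `[σ] ≤ [ρ]` iff
`∃ μ, σ ≤ μ ↔* ρ`. -/
def fsRunLE {S T : Type*} (N : Net S T) (x y : PartialFSRun N) : Prop :=
  ∃ σ ρ : FSeq N, fsClass N σ = x ∧ fsClass N ρ = y ∧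
    ∃ μ : List T, σ.1 <+: μ ∧ N.AdjEquiv μ ρ.1

/-- An FS-run: a prefix-closed and directed set of partial FS-runs. -/
def IsFSRun {S T : Type*} (N : Net S T) (R : Set (PartialFSRun N)) : Prop :=
  (∀ x y, fsRunLE N x y → y ∈ R → x ∈ R) ∧
  (∀ x ∈ R, ∀ y ∈ R, ∃ z ∈ R, fsRunLE N x z ∧ fsRunLE N y z)

/-- An FS-run `R` is conflict-free iff whenever, for every `t` in a finite
non-empty multiset `G`, the class of `σ t^{G(t)}` belongs to `R` and
`M₀ →σ →(G↾{t})`, then `M₀ →σ →G`. -/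
def ConflictFreeFSRun {S T : Type*} (N : Net S T)
    (R : Set (PartialFSRun N)) : Prop :=
  ∀ (G : Multiset T) (σ : List T), G ≠ 0 →
    (∀ t ∈ G,
      (∃ h : N.FS (σ ++ List.replicate (G.count t) t),
        fsClass N ⟨σ ++ List.replicate (G.count t) t, h⟩ ∈ R) ∧
      ∃ M, N.FireSeq N.M0 σ M ∧
        N.Enabled M (Multiset.replicate (G.count t) t)) →
    ∃ M, N.FireSeq N.M0 σ M ∧ N.Enabled M G

/-- The raw data of a candidate (GR-)process of a net with places `S` and
transitions `T`: an occurrence net whose places are drawn from `α` and whose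
transitions are drawn from `β`, together with the projections to `S` and `T`. -/
structure RawProc (S T α β : Type*) where
  places : Set α
  transitions : Set β
  flowPT : α → β → ℕ
  flowTP : β → α → ℕ
  initMark : α → ℕ
  projS : α → S
  projT : β → T

namespace RawProc

variable {S T α β : Type*}

/-- The flow relation of the occurrence net, as a relation on `α ⊕ β`. -/
def flowRel (P : RawProc S T α β) : (α ⊕ β) → (α ⊕ β) → Prop := fun x y =>
  match x, y with
  | Sum.inl p, Sum.inr t => P.flowPT p t ≠ 0
  | Sum.inr t, Sum.inl p => P.flowTP t p ≠ 0
  | _, _ => False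

/-- `F⁺`, the transitive closure of the flow relation. -/
def causal (P : RawProc S T α β) : (α ⊕ β) → (α ⊕ β) → Prop :=
  Relation.TransGen P.flowRel

/-- `P` is finite iff its set of transitions is finite. -/
def FiniteProc (P : RawProc S T α β) : Prop := P.transitions.Finite

/-- `Q` is a prefix of `P` (written `Q ≤ P`): the places and transitions of `Q`
are included in those of `P`, the initial markings coincide, and flow relation
and projection of `Q` are the restrictions of those of `P`. -/
def IsPrefix (Q P : RawProc S T α β) : Prop :=
  Q.places ⊆ P.places ∧ Q.transitions ⊆ P.transitions ∧
  Q.initMark = P.initMark ∧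
  (∀ p ∈ Q.places, ∀ t ∈ Q.transitions,
    Q.flowPT p t = P.flowPT p t ∧ Q.flowTP t p = P.flowTP t p) ∧
  (∀ p ∈ Q.places, Q.projS p = P.projS p) ∧
  (∀ t ∈ Q.transitions, Q.projT t = P.projT t)

/-- Isomorphism of processes of the same net: a bijection between places and
between transitions preserving flow, initial marking and the projections. -/
def Iso (P Q : RawProc S T α β) : Prop :=
  ∃ (fS : α → α) (fT : β → β),
    Set.BijOn fS P.places Q.places ∧ Set.BijOn fT P.transitions Q.transitions ∧
    (∀ p ∈ P.places, ∀ t ∈ P.transitions,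
      Q.flowPT (fS p) (fT t) = P.flowPT p t ∧
      Q.flowTP (fT t) (fS p) = P.flowTP t p) ∧
    (∀ p ∈ P.places, Q.initMark (fS p) = P.initMark p) ∧
    (∀ p ∈ P.places, Q.projS (fS p) = P.projS p) ∧
    (∀ t ∈ P.transitions, Q.projT (fT t) = P.projT t)

/-- `swap(P,p,q)`: exchange the outgoing arcs of the places `p` and `q`. -/
def swap (P : RawProc S T α β) (p q : α) : RawProc S T α β :=
  { P with flowPT := fun x t =>
      if x = p then P.flowPT q t
      else if x = q then P.flowPT p t
      else P.flowPT x t }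

/-- One step swapping equivalence `P ≈s Q`: `swap(P,p,q)` is isomorphic to `Q`
for some causally unrelated places `p`, `q` with the same image in the net. -/
def SwapStep (P Q : RawProc S T α β) : Prop :=
  ∃ p q : α, p ∈ P.places ∧ q ∈ P.places ∧ P.projS p = P.projS q ∧
    ¬ P.causal (Sum.inl p) (Sum.inl q) ∧ ¬ P.causal (Sum.inl q) (Sum.inl p) ∧
    Iso (P.swap p q) Q

/-- `≈s*`: the reflexive transitive closure of one step swapping equivalence. -/
def SwapEquiv : RawProc S T α β → RawProc S T α β → Prop :=
  Relation.ReflTransGen SwapStep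

/-- `Lin(P)`: the linearisations of a finite process `P`, i.e. the images under
the projection of the enumerations of its transitions compatible with `F*`. -/
def Lin (P : RawProc S T α β) : Set (List T) :=
  { σ | ∃ ts : List β, ts.Nodup ∧ (∀ t : β, t ∈ ts ↔ t ∈ P.transitions) ∧
      (∀ (i j : ℕ) (hi : i < ts.length) (hj : j < ts.length),
        Relation.ReflTransGen P.flowRel
          (Sum.inr (ts.get ⟨i, hi⟩)) (Sum.inr (ts.get ⟨j, hj⟩)) → i ≤ j) ∧
      σ = ts.map P.projT }

end RawProc

/-- `P` is a (GR-)process of the net `N`: its underlying net is an occurrence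
net (unbranched places, acyclic flow, finite causal pasts, transitions with
finite non-empty presets and finite postsets), the flow, initial marking and
projections are normalised to vanish outside the places/transitions, and the
projection maps the process onto `N` respecting initial marking and arc
weights (counted via the preimages of the projection). -/
structure IsProcessOf {S T α β : Type*} (N : Net S T)
    (P : RawProc S T α β) : Prop where
  flowPT_dom : ∀ p t, P.flowPT p t ≠ 0 → p ∈ P.places ∧ t ∈ P.transitions
  flowTP_dom : ∀ t p, P.flowTP t p ≠ 0 → p ∈ P.places ∧ t ∈ P.transitions
  initMark_dom : ∀ p, p ∉ P.places → P.initMark p = 0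
  pre_place : ∀ p ∈ P.places,
    {t | P.flowTP t p ≠ 0}.Subsingleton ∧ ∀ t, P.flowTP t p ≤ 1
  post_place : ∀ p ∈ P.places,
    {t | P.flowPT p t ≠ 0}.Subsingleton ∧ ∀ t, P.flowPT p t ≤ 1
  init_one : ∀ p ∈ P.places, (∀ t, P.flowTP t p = 0) → P.initMark p = 1
  init_zero : ∀ p ∈ P.places, (∃ t, P.flowTP t p ≠ 0) → P.initMark p = 0
  acyclic : ∀ x, ¬ P.causal x x
  finite_past : ∀ t ∈ P.transitions,
    {u : β | P.causal (Sum.inr u) (Sum.inr t)}.Finite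
  t_pre_fin : ∀ t ∈ P.transitions, {p | P.flowPT p t ≠ 0}.Finite
  t_pre_ne : ∀ t ∈ P.transitions, ∃ p, P.flowPT p t ≠ 0
  t_post_fin : ∀ t ∈ P.transitions, {p | P.flowTP t p ≠ 0}.Finite
  proj_init_fin : ∀ s : S, {p | P.projS p = s ∧ P.initMark p ≠ 0}.Finite
  proj_init : ∀ s : S, (∑ᶠ p ∈ {p | P.projS p = s}, P.initMark p) = N.M0 s
  proj_pre : ∀ t ∈ P.transitions, ∀ s : S,
    (∑ᶠ p ∈ {p | P.projS p = s}, P.flowPT p t) = N.pre (P.projT t) s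
  proj_post : ∀ t ∈ P.transitions, ∀ s : S,
    (∑ᶠ p ∈ {p | P.projS p = s}, P.flowTP t p) = N.post (P.projT t) s

/-- The type of finite GR-processes of `N` with places in `α` and transitions
in `β`. -/
def FinProcOf {S T : Type*} (N : Net S T) (α β : Type*) :=
  {P : RawProc S T α β // IsProcessOf N P ∧ P.FiniteProc}

/-- Partial BD-runs: `≈s*`-equivalence classes of finite GR-processes. -/
def PartialBDRun {S T : Type*} (N : Net S T) (α β : Type*) :=
  Quot (fun P Q : FinProcOf N α β => RawProc.SwapEquiv P.1 Q.1)

/-- `⟦P⟧`, the `≈s*`-equivalence class of a finite process. -/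
def bdClass {S T α β : Type*} (N : Net S T) (P : FinProcOf N α β) :
    PartialBDRun N α β :=
  Quot.mk _ P

/-- The lifted prefix relation on `≈s*`-equivalence classes:
`⟦P⟧ ≤ ⟦Q⟧` iff `P ≈s* P' ≤ Q' ≈s* Q` for some `P'`, `Q'`. -/
def bdRunLE {S T α β : Type*} (N : Net S T)
    (x y : PartialBDRun N α β) : Prop :=
  ∃ P Q : FinProcOf N α β, bdClass N P = x ∧ bdClass N Q = y ∧
    ∃ P' Q' : RawProc S T α β,
      RawProc.SwapEquiv P.1 P' ∧ RawProc.IsPrefix P' Q' ∧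
      RawProc.SwapEquiv Q' Q.1

/-- A BD-run: a prefix-closed and directed set of partial BD-runs. -/
def IsBDRun {S T α β : Type*} (N : Net S T)
    (R : Set (PartialBDRun N α β)) : Prop :=
  (∀ x y, bdRunLE N x y → y ∈ R → x ∈ R) ∧
  (∀ x ∈ R, ∀ y ∈ R, ∃ z ∈ R, bdRunLE N x z ∧ bdRunLE N y z)

/-- `⌊P⌋ = ↓{⟦P'⟧ | P' ≤ P, P' finite}`: the prefix-closure of the set of
classes of finite prefixes of the process `P`. -/
def BDify {S T α β : Type*} (N : Net S T) (P : RawProc S T α β) :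
    Set (PartialBDRun N α β) :=
  { x | ∃ Q : FinProcOf N α β, RawProc.IsPrefix Q.1 P ∧ bdRunLE N x (bdClass N Q) }

/-- Swapping equivalence `P ≈s∞ Q` of (possibly infinite) processes:
`↓{⟦P'⟧ | P' ≤ P, P' finite} = ↓{⟦Q'⟧ | Q' ≤ Q, Q' finite}`. -/
def SwapEquivInf {S T α β : Type*} (N : Net S T)
    (P Q : RawProc S T α β) : Prop :=
  BDify N P = BDify N Q

/-- A canonical carrier type, large enough to host every GR-process of a net
with places `S` and transitions `T`. -/
abbrev BigCarrier (S T : Type*) := Set ((S ⊕ T) × ℕ)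

end


private lemma finsum_le_eq_aux {γ : Type*} (f g : γ → ℕ) (hle : ∀ a, g a ≤ f a)
    (hf : (Function.support f).Finite) (hsum : (∑ᶠ a, g a) = ∑ᶠ a, f a) :
    ∀ a, g a = f a := by
  have hsub : Function.support g ⊆ Function.support f := by
    intro a ha
    simp only [Function.mem_support] at ha ⊢
    exact fun h => ha (Nat.le_antisymm (h ▸ hle a) (Nat.zero_le _))
  rw [finsum_eq_finset_sum_of_support_subset f (s := hf.toFinset) (by simp),
      finsum_eq_finset_sum_of_support_subset g (s := hf.toFinset)
        (hsub.trans (by simp))] at hsum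
  by_contra hcon
  push_neg at hcon
  obtain ⟨a, ha⟩ := hcon
  have hlt : g a < f a := lt_of_le_of_ne (hle a) ha
  have hmem : a ∈ hf.toFinset := by
    simp only [Set.Finite.mem_toFinset, Function.mem_support]
    exact fun h => by omega
  exact absurd hsum (ne_of_lt (Finset.sum_lt_sum (fun i _ => hle i) ⟨a, hmem, hlt⟩))

/-- remark below Definition 5 of the paper: any causally
downward closed set `U` of transitions of a GR-process `P` of `N` determines a
unique prefix of `P` whose set of transitions is `U`; its places are the
initial places of `P` together with the postplaces of transitions in `U`. -/
theorem unique_prefix_of_downward_closed {S T α β : Type*} (N : Net S T)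
    (P : RawProc S T α β) (hP : IsProcessOf N P)
    (U : Set β) (hU : U ⊆ P.transitions)
    (hdc : ∀ t u : β, u ∈ U → P.causal (Sum.inr t) (Sum.inr u) → t ∈ U) :
    ∃ Q : RawProc S T α β,
      (IsProcessOf N Q ∧ RawProc.IsPrefix Q P ∧ Q.transitions = U ∧
        Q.places = {p ∈ P.places |
          (∀ t, P.flowTP t p = 0) ∨ ∃ t ∈ U, P.flowTP t p ≠ 0}) ∧
      ∀ Q' : RawProc S T α β, IsProcessOf N Q' → RawProc.IsPrefix Q' P →
        Q'.transitions = U →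
        (Q'.places = Q.places ∧ Q'.initMark = Q.initMark ∧
          (∀ p ∈ Q.places, ∀ t ∈ U,
            Q'.flowPT p t = Q.flowPT p t ∧ Q'.flowTP t p = Q.flowTP t p) ∧
          (∀ p ∈ Q.places, Q'.projS p = Q.projS p) ∧
          (∀ t ∈ U, Q'.projT t = Q.projT t)) := by
    classical
  set Qpl : Set α := {p ∈ P.places |
      (∀ t, P.flowTP t p = 0) ∨ ∃ t ∈ U, P.flowTP t p ≠ 0} with hQpl
  set Q : RawProc S T α β :=
    { places := Qpl
      transitions := U
      flowPT := fun p t => if p ∈ Qpl ∧ t ∈ U then P.flowPT p t else 0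
      flowTP := fun t p => if p ∈ Qpl ∧ t ∈ U then P.flowTP t p else 0
      initMark := P.initMark
      projS := P.projS
      projT := P.projT } with hQ
  -- any preplace of a transition in U is in Qpl
  have hpre_mem : ∀ t ∈ U, ∀ p, P.flowPT p t ≠ 0 → p ∈ Qpl := by
    intro t ht p hp
    refine ⟨(hP.flowPT_dom p t hp).1, ?_⟩
    by_cases hinit : ∀ u, P.flowTP u p = 0
    · exact Or.inl hinit
    · push_neg at hinit
      obtain ⟨u, hu⟩ := hinit
      refine Or.inr ⟨u, hdc u t ht ?_, hu⟩
      exact Relation.TransGen.head (b := Sum.inl p) hu (Relation.TransGen.single hp)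
  have hpost_mem : ∀ t ∈ U, ∀ p, P.flowTP t p ≠ 0 → p ∈ Qpl := by
    intro t ht p hp
    exact ⟨(hP.flowTP_dom t p hp).1, Or.inr ⟨t, ht, hp⟩⟩
  -- Q's flows agree with P's for transitions in U
  have hPTeq : ∀ t ∈ U, ∀ p, Q.flowPT p t = P.flowPT p t := by
    intro t ht p
    by_cases hp : P.flowPT p t = 0
    · simp [hQ, hp]
    · simp [hQ, hpre_mem t ht p hp, ht]
  have hTPeq : ∀ t ∈ U, ∀ p, Q.flowTP t p = P.flowTP t p := by
    intro t ht p
    by_cases hp : P.flowTP t p = 0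
    · simp [hQ, hp]
    · simp [hQ, hpost_mem t ht p hp, ht]
  have hPTle : ∀ p t, Q.flowPT p t = P.flowPT p t ∨ Q.flowPT p t = 0 := by
    intro p t
    by_cases h : p ∈ Qpl ∧ t ∈ U
    · exact Or.inl (by simp [hQ, h])
    · exact Or.inr (by simp [hQ, h])
  have hTPle : ∀ t p, Q.flowTP t p = P.flowTP t p ∨ Q.flowTP t p = 0 := by
    intro t p
    by_cases h : p ∈ Qpl ∧ t ∈ U
    · exact Or.inl (by simp [hQ, h])
    · exact Or.inr (by simp [hQ, h])
  have hflowrel : ∀ x y, Q.flowRel x y → P.flowRel x y := by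
    rintro (p | t) (q | u) h
    · exact h.elim
    · have h' : Q.flowPT p u ≠ 0 := h
      show P.flowPT p u ≠ 0
      rcases hPTle p u with he | he
      · rwa [he] at h'
      · exact absurd he h'
    · have h' : Q.flowTP t q ≠ 0 := h
      show P.flowTP t q ≠ 0
      rcases hTPle t q with he | he
      · rwa [he] at h'
      · exact absurd he h'
    · exact h.elim
  have hcausal : ∀ x y, Q.causal x y → P.causal x y := fun x y h =>
    Relation.TransGen.mono hflowrel x y h
  have hQproc : IsProcessOf N Q := by
    constructor
    · intro p t h
      simp only [hQ, ne_eq, ite_eq_right_iff, not_forall] at h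
      exact ⟨h.choose.1, h.choose.2⟩
    · intro t p h
      simp only [hQ, ne_eq, ite_eq_right_iff, not_forall] at h
      exact ⟨h.choose.1, h.choose.2⟩
    · intro p hp
      by_cases hpP : p ∈ P.places
      · have h1 : ¬ ∀ t, P.flowTP t p = 0 := fun hall => hp ⟨hpP, Or.inl hall⟩
        push_neg at h1
        exact hP.init_zero p hpP h1
      · exact hP.initMark_dom p hpP
    · intro p hp
      refine ⟨fun t ht u hu => ?_, fun t => ?_⟩
      · rcases hTPle t p with he | he
        · rcases hTPle u p with he' | he'
          · exact (hP.pre_place p hp.1).1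
              (show P.flowTP t p ≠ 0 by rw [← he]; exact ht)
              (show P.flowTP u p ≠ 0 by rw [← he']; exact hu)
          · exact absurd he' hu
        · exact absurd he ht
      · rcases hTPle t p with he | he
        · exact he ▸ (hP.pre_place p hp.1).2 t
        · omega
    · intro p hp
      refine ⟨fun t ht u hu => ?_, fun t => ?_⟩
      · rcases hPTle p t with he | he
        · rcases hPTle p u with he' | he'
          · exact (hP.post_place p hp.1).1
              (show P.flowPT p t ≠ 0 by rw [← he]; exact ht)
              (show P.flowPT p u ≠ 0 by rw [← he']; exact hu)
          · exact absurd he' hu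
        · exact absurd he ht
      · rcases hPTle p t with he | he
        · exact he ▸ (hP.post_place p hp.1).2 t
        · omega
    · intro p hp h
      rcases hp.2 with hinit | ⟨t, ht, hne⟩
      · exact hP.init_one p hp.1 hinit
      · exact absurd (h t) (by rw [hTPeq t ht]; exact hne)
    · rintro p hp ⟨t, ht⟩
      rcases hTPle t p with he | he
      · exact hP.init_zero p hp.1 ⟨t, he ▸ ht⟩
      · exact absurd he ht
    · exact fun x hx => hP.acyclic x (hcausal x x hx)
    · intro t ht
      exact (hP.finite_past t (hU ht)).subset fun u hu => hcausal _ _ hu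
    · intro t ht
      refine (hP.t_pre_fin t (hU ht)).subset fun p hp => ?_
      rcases hPTle p t with he | he
      · show P.flowPT p t ≠ 0
        rw [← he]; exact hp
      · exact absurd he hp
    · intro t ht
      obtain ⟨p, hp⟩ := hP.t_pre_ne t (hU ht)
      exact ⟨p, by rw [hPTeq t ht]; exact hp⟩
    · intro t ht
      refine (hP.t_post_fin t (hU ht)).subset fun p hp => ?_
      rcases hTPle t p with he | he
      · show P.flowTP t p ≠ 0
        rw [← he]; exact hp
      · exact absurd he hp
    · exact hP.proj_init_fin
    · exact hP.proj_init
    · intro t ht s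
      have : ∀ p ∈ {p | P.projS p = s}, Q.flowPT p t = P.flowPT p t :=
        fun p _ => hPTeq t ht p
      rw [show (∑ᶠ p ∈ {p | Q.projS p = s}, Q.flowPT p t)
            = ∑ᶠ p ∈ {p | P.projS p = s}, P.flowPT p t from
          finsum_mem_congr rfl this]
      exact hP.proj_pre t (hU ht) s
    · intro t ht s
      have : ∀ p ∈ {p | P.projS p = s}, Q.flowTP t p = P.flowTP t p :=
        fun p _ => hTPeq t ht p
      rw [show (∑ᶠ p ∈ {p | Q.projS p = s}, Q.flowTP t p)
            = ∑ᶠ p ∈ {p | P.projS p = s}, P.flowTP t p from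
          finsum_mem_congr rfl this]
      exact hP.proj_post t (hU ht) s
  have hQpre : RawProc.IsPrefix Q P := by
    refine ⟨fun p hp => hp.1, hU, rfl, fun p hp t ht => ?_, fun _ _ => rfl,
      fun _ _ => rfl⟩
    have hp' : p ∈ Qpl := hp
    have ht' : t ∈ U := ht
    exact ⟨by simp [hQ, hp', ht'], by simp [hQ, hp', ht']⟩
  refine ⟨Q, ⟨hQproc, hQpre, rfl, rfl⟩, ?_⟩
  intro Q' hQ'proc hQ'pre hQ'tr
  obtain ⟨hpl, htr, hinitm, hflow, hprS, hprT⟩ := hQ'pre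
  -- key: for t ∈ U, Q'.flowTP t p = P.flowTP t p for all p
  have hkey : ∀ t ∈ U, ∀ p, Q'.flowTP t p = P.flowTP t p := by
    intro t ht p
    set s := P.projS p with hs
    set f : α → ℕ := fun q => if P.projS q = s then P.flowTP t q else 0 with hf
    set g : α → ℕ := fun q => if Q'.projS q = s then Q'.flowTP t q else 0 with hg
    have htQ' : t ∈ Q'.transitions := hQ'tr ▸ ht
    have hgf : ∀ q, g q = f q ∨ g q = 0 := by
      intro q
      by_cases hq : Q'.flowTP t q = 0
      · simp [hg, hq]
      · have hqpl : q ∈ Q'.places := (hQ'proc.flowTP_dom t q hq).1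
        have h1 : Q'.flowTP t q = P.flowTP t q := (hflow q hqpl t htQ').2
        have h2 : Q'.projS q = P.projS q := hprS q hqpl
        simp [hg, hf, h1, h2]
    have hle : ∀ q, g q ≤ f q := by
      intro q; rcases hgf q with h | h
      · omega
      · omega
    have hfsup : (Function.support f).Finite := by
      refine (hP.t_post_fin t (hU ht)).subset fun q hq => ?_
      simp only [Function.mem_support, hf] at hq
      intro h0; simp [h0] at hq
    have hsumf : (∑ᶠ q, f q) = N.post (P.projT t) s := by
      rw [← hP.proj_post t (hU ht) s, finsum_mem_def]
      exact finsum_congr fun q => by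
        by_cases hq : P.projS q = s <;> simp [hf, Set.indicator, hq]
    have hsumg : (∑ᶠ q, g q) = N.post (P.projT t) s := by
      rw [← hprT t htQ', ← hQ'proc.proj_post t htQ' s, finsum_mem_def]
      exact finsum_congr fun q => by
        by_cases hq : Q'.projS q = s <;> simp [hg, Set.indicator, hq]
    have heq := finsum_le_eq_aux f g hle hfsup (hsumg.trans hsumf.symm)
    by_cases hpz : Q'.flowTP t p = 0
    · suffices h : P.flowTP t p = 0 by rw [hpz, h]
      by_contra hPz
      have hgp : g p = 0 := by simp [hg, hpz]
      have hfp : f p = P.flowTP t p := by simp [hf, hs]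
      rw [heq p, hfp] at hgp
      exact hPz hgp
    · exact (hflow p (hQ'proc.flowTP_dom t p hpz).1 t htQ').2
  have hplaces : Q'.places = Q.places := by
    ext p
    constructor
    · intro hp
      refine ⟨hpl hp, ?_⟩
      by_cases hinit : ∀ t, P.flowTP t p = 0
      · exact Or.inl hinit
      · push_neg at hinit
        by_cases hQ'init : ∀ t, Q'.flowTP t p = 0
        · exfalso
          have h1 : Q'.initMark p = 1 := hQ'proc.init_one p hp hQ'init
          have h0 : P.initMark p = 0 := hP.init_zero p (hpl hp) hinit
          rw [hinitm] at h1
          omega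
        · push_neg at hQ'init
          obtain ⟨t, ht⟩ := hQ'init
          have htU : t ∈ U := hQ'tr ▸ (hQ'proc.flowTP_dom t p ht).2
          exact Or.inr ⟨t, htU, by rw [← hkey t htU p]; exact ht⟩
    · rintro ⟨hpP, hinit | ⟨t, ht, hne⟩⟩
      · by_contra hnp
        have h0 : Q'.initMark p = 0 := hQ'proc.initMark_dom p hnp
        have h1 : P.initMark p = 1 := hP.init_one p hpP hinit
        rw [hinitm] at h0
        omega
      · have : Q'.flowTP t p ≠ 0 := by rw [hkey t ht p]; exact hne
        exact (hQ'proc.flowTP_dom t p this).1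
  refine ⟨hplaces, hinitm, ?_, ?_, ?_⟩
  · intro p hp t ht
    have hp' : p ∈ Q'.places := hplaces ▸ hp
    have ht' : t ∈ Q'.transitions := hQ'tr ▸ ht
    obtain ⟨h1, h2⟩ := hflow p hp' t ht'
    exact ⟨h1.trans (hPTeq t ht p).symm, h2.trans (hTPeq t ht p).symm⟩
  · intro p hp
    exact hprS p (hplaces ▸ hp)
  · intro t ht
    exact hprT t (hQ'tr ▸ ht)
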